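/- arXiv:2006.04292 — 4 statements merged into one kernel-verified Lean document; each statement's English description precedes it below -/
import Mathlib

section
/- Let T, T⁽¹⁾, …, T⁽ᴷ⁾ be real-valued random variables that are exchangeable (their joint distribution is invariant under any permutation of the K+1 variables). Define p = (1 + #{k : T ≤ T⁽ᵏ⁾})/(K + 1). Then for every α ∈ [0,1], P(p ≤ α) ≤ α. -/
open MeasureTheory
open Finset
open scoped ENNReal NNReal

noncomputable def rnk {n : ℕ} (i : Fin n) (x : Fin n → ℝ) : ℕ :=
  (Finset.univ.filter (fun j => j ≠ i ∧ x i ≤ x j)).card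

lemma measurable_rnk {n : ℕ} (i : Fin n) : Measurable (rnk i) := by
  have h : rnk i = fun x => ∑ j : Fin n, if j ≠ i ∧ x i ≤ x j then 1 else 0 := by
    funext x; rw [rnk, Finset.card_filter]
  rw [h]
  apply Finset.measurable_sum
  intro j _
  apply Measurable.ite _ measurable_const measurable_const
  have : {x : Fin n → ℝ | j ≠ i ∧ x i ≤ x j} = {x | j ≠ i} ∩ {x | x i ≤ x j} := rfl
  rw [this]
  exact MeasurableSet.inter (MeasurableSet.const _)
    (measurableSet_le (measurable_pi_apply i) (measurable_pi_apply j))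

lemma card_small_rnk {n : ℕ} (x : Fin n → ℝ) (m : ℕ) :
    (Finset.univ.filter (fun i => rnk i x ≤ m)).card ≤ m + 1 := by
  set S := Finset.univ.filter (fun i : Fin n => rnk i x ≤ m) with hS
  rcases S.eq_empty_or_nonempty with h | h
  · simp [h]
  obtain ⟨i₀, hi₀S, hmin⟩ := S.exists_min_image x h
  have hsub : S.erase i₀ ⊆ Finset.univ.filter (fun j => j ≠ i₀ ∧ x i₀ ≤ x j) := by
    intro j hj
    rw [Finset.mem_erase] at hj
    simp only [Finset.mem_filter, Finset.mem_univ, true_and]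
    exact ⟨hj.1, hmin j hj.2⟩
  have h1 : (S.erase i₀).card ≤ rnk i₀ x := Finset.card_le_card hsub
  have h2 : rnk i₀ x ≤ m := by
    have := Finset.mem_filter.1 hi₀S; exact this.2
  have h3 := Finset.card_erase_of_mem hi₀S
  omega

lemma rnk_comp {n : ℕ} (σ : Equiv.Perm (Fin n)) (i : Fin n) (x : Fin n → ℝ) :
    rnk (σ i) x = rnk i (x ∘ σ) := by
  unfold rnk
  apply Finset.card_bij' (fun j _ => σ.symm j) (fun j _ => σ j)
  · intro j hj
    simp only [Finset.mem_filter, Finset.mem_univ, true_and] at hj ⊢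
    refine ⟨fun h => hj.1 ?_, by simpa using hj.2⟩
    · rw [← h]; simp
  · intro j hj
    simp only [Finset.mem_filter, Finset.mem_univ, true_and] at hj ⊢
    exact ⟨fun h => hj.1 (σ.injective (by simpa using h)), by simpa using hj.2⟩
  · intro j _; simp
  · intro j _; simp

/-- For exchangeable statistics T⁽⁰⁾,…,T⁽ᴷ⁾ (with T = T⁽⁰⁾), the randomization p-value
p = (1 + #{k ≥ 1 : T ≤ T⁽ᵏ⁾})/(K+1) satisfies P(p ≤ α) ≤ α for all α ∈ [0,1]. -/
theorem randomization_pvalue_valid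
    {Ω : Type*} [MeasurableSpace Ω] (μ : Measure Ω) [IsProbabilityMeasure μ]
    {K : ℕ} (T : Fin (K + 1) → Ω → ℝ)
    (hmeas : ∀ i, Measurable (T i))
    -- exchangeability: the joint law is invariant under permutations of the K+1 variables
    (hexch : ∀ σ : Equiv.Perm (Fin (K + 1)),
      Measure.map (fun ω => fun i => T (σ i) ω) μ
        = Measure.map (fun ω => fun i => T i ω) μ) :
    ∀ α : ℝ, 0 ≤ α → α ≤ 1 →
      μ {ω | (1 + ({k : Fin K | T 0 ω ≤ T k.succ ω}.ncard : ℝ)) / (K + 1) ≤ α}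
        ≤ ENNReal.ofReal α := by
  intro α hα0 hα1
  classical
  set Tvec : Ω → (Fin (K + 1) → ℝ) := fun ω i => T i ω with hTvec
  have hTvecMeas : Measurable Tvec := measurable_pi_lambda _ hmeas
  -- ncard equals rnk 0
  have hncard : ∀ ω, ({k : Fin K | T 0 ω ≤ T k.succ ω}.ncard) = rnk 0 (Tvec ω) := by
    intro ω
    rw [Set.ncard_eq_toFinset_card', Set.toFinset_setOf]
    unfold rnk
    refine Finset.card_bij' (fun k (_ : k ∈ _) => Fin.succ k)
      (fun j hj => Fin.pred j (Finset.mem_filter.1 hj).2.1) ?_ ?_ ?_ ?_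
    · intro k hk
      simp only [Finset.mem_filter, Finset.mem_univ, true_and] at hk ⊢
      exact ⟨Fin.succ_ne_zero k, hk⟩
    · intro j hj
      simp only [Finset.mem_filter, Finset.mem_univ, true_and] at hj ⊢
      show T 0 ω ≤ T (Fin.pred j _).succ ω
      rw [Fin.succ_pred]
      exact hj.2
    · intro k hk
      exact Fin.pred_succ k
    · intro j hj
      exact Fin.succ_pred j _
  have hA : ∀ m : ℕ, MeasurableSet {x : Fin (K + 1) → ℝ | rnk 0 x ≤ m} :=
    fun m => measurable_rnk 0 measurableSet_Iic
  have hinv : ∀ (m : ℕ) (i : Fin (K + 1)),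
      μ {ω | rnk i (Tvec ω) ≤ m} = μ {ω | rnk 0 (Tvec ω) ≤ m} := by
    intro m i
    set σ := Equiv.swap (0 : Fin (K + 1)) i with hσ
    have hσ0 : σ 0 = i := Equiv.swap_apply_left 0 i
    have h1 : ∀ ω, rnk i (Tvec ω) = rnk 0 (Tvec ω ∘ σ) := by
      intro ω; rw [← hσ0, rnk_comp]
    have hmeasσ : Measurable (fun ω => fun j => T (σ j) ω) :=
      measurable_pi_lambda _ fun j => hmeas (σ j)
    calc μ {ω | rnk i (Tvec ω) ≤ m}
        = μ ((fun ω => fun j => T (σ j) ω) ⁻¹' {x | rnk 0 x ≤ m}) := by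
          congr 1; ext ω
          rw [Set.mem_setOf_eq, Set.mem_preimage, Set.mem_setOf_eq, h1 ω]
          exact Iff.rfl
      _ = Measure.map (fun ω => fun j => T (σ j) ω) μ {x | rnk 0 x ≤ m} :=
          (Measure.map_apply hmeasσ (hA m)).symm
      _ = Measure.map Tvec μ {x | rnk 0 x ≤ m} := by rw [hexch σ]
      _ = μ {ω | rnk 0 (Tvec ω) ≤ m} := Measure.map_apply hTvecMeas (hA m)
  have key : ∀ m : ℕ, ((K : ℝ≥0∞) + 1) * μ {ω | rnk 0 (Tvec ω) ≤ m} ≤ ((m + 1 : ℕ) : ℝ≥0∞) := by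
    intro m
    set E : Fin (K + 1) → Set Ω := fun i => {ω | rnk i (Tvec ω) ≤ m} with hE
    have hEmeas : ∀ i, MeasurableSet (E i) := fun i =>
      ((measurable_rnk i).comp hTvecMeas) measurableSet_Iic
    have hsum : ∑ i : Fin (K + 1), μ (E i) ≤ ((m + 1 : ℕ) : ℝ≥0∞) := by
      calc ∑ i : Fin (K + 1), μ (E i)
          = ∑ i : Fin (K + 1), ∫⁻ ω, (E i).indicator (fun _ => (1 : ℝ≥0∞)) ω ∂μ :=
            Finset.sum_congr rfl fun i _ => (lintegral_indicator_one (hEmeas i)).symm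
        _ = ∫⁻ ω, ∑ i : Fin (K + 1), (E i).indicator (fun _ => (1 : ℝ≥0∞)) ω ∂μ :=
            (lintegral_finset_sum _ fun i _ => measurable_const.indicator (hEmeas i)).symm
        _ ≤ ∫⁻ _, ((m + 1 : ℕ) : ℝ≥0∞) ∂μ := by
            apply lintegral_mono
            intro ω
            calc ∑ i : Fin (K + 1), (E i).indicator (fun _ => (1 : ℝ≥0∞)) ω
                = ∑ i : Fin (K + 1), if rnk i (Tvec ω) ≤ m then (1 : ℝ≥0∞) else 0 := by
                  refine Finset.sum_congr rfl fun i _ => ?_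
                  rw [Set.indicator_apply]
                  simp only [hE, Set.mem_setOf_eq]
              _ = ((Finset.univ.filter fun i : Fin (K + 1) => rnk i (Tvec ω) ≤ m).card : ℝ≥0∞) :=
                  by rw [Finset.sum_boole]
              _ ≤ ((m + 1 : ℕ) : ℝ≥0∞) := Nat.cast_le.mpr (card_small_rnk (Tvec ω) m)
        _ = ((m + 1 : ℕ) : ℝ≥0∞) := by simp
    have hconst : ∑ i : Fin (K + 1), μ (E i) = ((K : ℝ≥0∞) + 1) * μ (E 0) := by
      rw [Finset.sum_congr rfl (fun i _ => hinv m i)]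
      rw [Finset.sum_const, Finset.card_univ, Fintype.card_fin, nsmul_eq_mul]
      push_cast
      rfl
    rw [← hconst]
    exact hsum
  set m1 := ⌊α * ((K : ℝ) + 1)⌋₊ with hm1
  have hKpos : (0 : ℝ) < (K : ℝ) + 1 := by positivity
  have hevent : {ω | (1 + ({k : Fin K | T 0 ω ≤ T k.succ ω}.ncard : ℝ)) / (K + 1) ≤ α}
      = {ω | 1 + rnk 0 (Tvec ω) ≤ m1} := by
    ext ω
    simp only [Set.mem_setOf_eq, hncard ω]
    rw [div_le_iff₀ hKpos, hm1, Nat.le_floor_iff (by positivity)]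
    constructor <;> (intro h; push_cast at h ⊢; linarith)
  rcases Nat.eq_zero_or_pos m1 with h0 | hpos
  · have hempty : {ω | 1 + rnk 0 (Tvec ω) ≤ m1} = ∅ := by
      ext ω; simp only [Set.mem_setOf_eq, h0, Set.mem_empty_iff_false, iff_false]; omega
    rw [hevent, hempty]
    simp
  · obtain ⟨m, hm⟩ : ∃ m, m1 = m + 1 := ⟨m1 - 1, by omega⟩
    have hev2 : {ω | 1 + rnk 0 (Tvec ω) ≤ m1} = {ω | rnk 0 (Tvec ω) ≤ m} := by
      ext ω; simp only [Set.mem_setOf_eq]; omega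
    rw [hevent, hev2]
    have hk := key m
    have hm1le : (m1 : ℝ≥0∞) ≤ ENNReal.ofReal α * ((K : ℝ≥0∞) + 1) := by
      have h1 : (m1 : ℝ) ≤ α * ((K : ℝ) + 1) := Nat.floor_le (by positivity)
      calc (m1 : ℝ≥0∞) = ENNReal.ofReal (m1 : ℝ) := (ENNReal.ofReal_natCast m1).symm
        _ ≤ ENNReal.ofReal (α * ((K : ℝ) + 1)) := ENNReal.ofReal_le_ofReal h1
        _ = ENNReal.ofReal α * ENNReal.ofReal ((K : ℝ) + 1) := ENNReal.ofReal_mul hα0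
        _ = ENNReal.ofReal α * ((K : ℝ≥0∞) + 1) := by
            rw [ENNReal.ofReal_add (by positivity) zero_le_one, ENNReal.ofReal_natCast,
              ENNReal.ofReal_one]
    have hne0 : ((K : ℝ≥0∞) + 1) ≠ 0 := by simp
    have hnetop : ((K : ℝ≥0∞) + 1) ≠ ⊤ :=
      ENNReal.add_ne_top.2 ⟨ENNReal.natCast_ne_top K, ENNReal.one_ne_top⟩
    have hchain : ((K : ℝ≥0∞) + 1) * μ {ω | rnk 0 (Tvec ω) ≤ m}
        ≤ ((K : ℝ≥0∞) + 1) * ENNReal.ofReal α := by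
      calc ((K : ℝ≥0∞) + 1) * μ {ω | rnk 0 (Tvec ω) ≤ m}
          ≤ ((m + 1 : ℕ) : ℝ≥0∞) := hk
        _ = (m1 : ℝ≥0∞) := by rw [hm]
        _ ≤ ENNReal.ofReal α * ((K : ℝ≥0∞) + 1) := hm1le
        _ = ((K : ℝ≥0∞) + 1) * ENNReal.ofReal α := mul_comm _ _
    exact (ENNReal.mul_le_mul_iff_right hne0 hnetop).mp hchain
end

section
/- Let Y, A, X be discrete random variables with Ŷ = f(X) for a fixed function f, and suppose Ŷ is conditionally independent of A given Y. Let Ã = h(Y, ε) where ε is independent of (X, A, Y) and the conditional law of Ã given Y equals that of A given Y. Then for any function T, the random variables T(Ŷ, Y, A) and T(Ŷ, Y, Ã) have the same distribution. -/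
open MeasureTheory ProbabilityTheory

/-- If Ŷ = f(X) satisfies equalized odds and Ã = h(Y, ε) with ε independent of (X, A, Y)
and with the conditional law of Ã given Y matching that of A given Y, then for any test
statistic T, T(Ŷ, Y, A) and T(Ŷ, Y, Ã) have the same distribution. -/
theorem fair_dummies_test_statistic_invariance
    {Ω : Type*} [MeasurableSpace Ω] (μ : Measure Ω) [IsProbabilityMeasure μ]
    {𝒳 𝒜 𝒴 𝒴' E β : Type*}
    [Countable 𝒳] [Countable 𝒜] [Countable 𝒴] [Countable 𝒴'] [Countable E]
    [MeasurableSpace 𝒳] [MeasurableSingletonClass 𝒳]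
    [MeasurableSpace 𝒜] [MeasurableSingletonClass 𝒜]
    [MeasurableSpace 𝒴] [MeasurableSingletonClass 𝒴]
    [MeasurableSpace E] [MeasurableSingletonClass E]
    [MeasurableSpace β]
    (X : Ω → 𝒳) (A : Ω → 𝒜) (Y : Ω → 𝒴) (eps : Ω → E)
    (f : 𝒳 → 𝒴') (h : 𝒴 → E → 𝒜)
    (hX : Measurable X) (hA : Measurable A) (hY : Measurable Y) (heps : Measurable eps)
    -- ε is independent of (X, A, Y)
    (hindep : IndepFun eps (fun ω => (X ω, A ω, Y ω)) μ)
    -- the conditional law of Ã = h(Y, ε) given Y equals that of A given Y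
    (hlaw : ∀ (a : 𝒜) (y : 𝒴), μ {ω | Y ω = y} ≠ 0 →
      μ {ω | h (Y ω) (eps ω) = a ∧ Y ω = y} / μ {ω | Y ω = y}
        = μ {ω | A ω = a ∧ Y ω = y} / μ {ω | Y ω = y})
    -- equalized odds: Ŷ = f(X) is conditionally independent of A given Y
    (heo : ∀ (yh : 𝒴') (a : 𝒜) (y : 𝒴), μ {ω | Y ω = y} ≠ 0 →
      μ {ω | f (X ω) = yh ∧ A ω = a ∧ Y ω = y} / μ {ω | Y ω = y}
        = (μ {ω | f (X ω) = yh ∧ Y ω = y} / μ {ω | Y ω = y}) *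
          (μ {ω | A ω = a ∧ Y ω = y} / μ {ω | Y ω = y})) :
    ∀ T : 𝒴' → 𝒴 → 𝒜 → β,
      Measure.map (fun ω => T (f (X ω)) (Y ω) (A ω)) μ
        = Measure.map (fun ω => T (f (X ω)) (Y ω) (h (Y ω) (eps ω))) μ := by
  -- endow 𝒴' with the discrete σ-algebra
  letI : MeasurableSpace 𝒴' := ⊤
  haveI : MeasurableSingletonClass 𝒴' := ⟨fun _ => trivial⟩
  intro T
  -- auxiliary: independence applied to concrete events
  have hW : Measurable (fun ω => (X ω, A ω, Y ω)) := hX.prodMk (hA.prodMk hY)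
  have hmeas_all : ∀ s : Set (𝒳 × 𝒜 × 𝒴), MeasurableSet s := fun s =>
    s.to_countable.measurableSet
  have hmeas_E : ∀ s : Set E, MeasurableSet s := fun s => s.to_countable.measurableSet
  have hindep' : ∀ (sE : Set E) (sW : Set (𝒳 × 𝒜 × 𝒴)),
      μ (eps ⁻¹' sE ∩ (fun ω => (X ω, A ω, Y ω)) ⁻¹' sW)
        = μ (eps ⁻¹' sE) * μ ((fun ω => (X ω, A ω, Y ω)) ⁻¹' sW) := fun sE sW =>
    hindep.measure_inter_preimage_eq_mul sE sW (hmeas_E sE) (hmeas_all sW)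
  -- the key pointwise equality of measures of fibers
  have key : ∀ (yh : 𝒴') (y : 𝒴) (a : 𝒜),
      μ {ω | f (X ω) = yh ∧ A ω = a ∧ Y ω = y}
        = μ {ω | f (X ω) = yh ∧ h (Y ω) (eps ω) = a ∧ Y ω = y} := by
    intro yh y a
    -- rewrite the tilde-event using independence
    have hset1 : {ω | f (X ω) = yh ∧ h (Y ω) (eps ω) = a ∧ Y ω = y}
        = eps ⁻¹' {e | h y e = a} ∩
          (fun ω => (X ω, A ω, Y ω)) ⁻¹' {p | f p.1 = yh ∧ p.2.2 = y} := by
      ext ω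
      simp only [Set.mem_setOf_eq, Set.mem_inter_iff, Set.mem_preimage]
      constructor <;> rintro ⟨h1, h2, h3⟩ <;> subst h3 <;> tauto
    have hset2 : {ω | h (Y ω) (eps ω) = a ∧ Y ω = y}
        = eps ⁻¹' {e | h y e = a} ∩
          (fun ω => (X ω, A ω, Y ω)) ⁻¹' {p | p.2.2 = y} := by
      ext ω
      simp only [Set.mem_setOf_eq, Set.mem_inter_iff, Set.mem_preimage]
      constructor <;> rintro ⟨h2, h3⟩ <;> subst h3 <;> tauto
    have hset3 : (fun ω => (X ω, A ω, Y ω)) ⁻¹' {p : 𝒳 × 𝒜 × 𝒴 | f p.1 = yh ∧ p.2.2 = y}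
        = {ω | f (X ω) = yh ∧ Y ω = y} := rfl
    have hset4 : (fun ω => (X ω, A ω, Y ω)) ⁻¹' {p : 𝒳 × 𝒜 × 𝒴 | p.2.2 = y}
        = {ω | Y ω = y} := rfl
    by_cases hq : μ {ω | Y ω = y} = 0
    · have h1 : μ {ω | f (X ω) = yh ∧ A ω = a ∧ Y ω = y} = 0 :=
        measure_mono_null (fun ω hω => hω.2.2) hq
      have h2 : μ {ω | f (X ω) = yh ∧ h (Y ω) (eps ω) = a ∧ Y ω = y} = 0 :=
        measure_mono_null (fun ω hω => hω.2.2) hq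
      rw [h1, h2]
    · set q := μ {ω | Y ω = y} with hqdef
      have hqt : q ≠ ⊤ := measure_ne_top μ _
      set c := μ (eps ⁻¹' {e | h y e = a}) with hcdef
      have e1 : μ {ω | f (X ω) = yh ∧ h (Y ω) (eps ω) = a ∧ Y ω = y}
          = c * μ {ω | f (X ω) = yh ∧ Y ω = y} := by
        rw [hset1, hindep', hset3]
      have e2 : μ {ω | h (Y ω) (eps ω) = a ∧ Y ω = y} = c * q := by
        rw [hset2, hindep', hset4]
      -- the tilde variable has the same conditional law as A on {Y = y}
      have hAZ : μ {ω | h (Y ω) (eps ω) = a ∧ Y ω = y} = μ {ω | A ω = a ∧ Y ω = y} := by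
        calc μ {ω | h (Y ω) (eps ω) = a ∧ Y ω = y}
            = q * (μ {ω | h (Y ω) (eps ω) = a ∧ Y ω = y} / q) :=
              (ENNReal.mul_div_cancel hq hqt).symm
          _ = q * (μ {ω | A ω = a ∧ Y ω = y} / q) := by rw [hlaw a y hq]
          _ = μ {ω | A ω = a ∧ Y ω = y} := ENNReal.mul_div_cancel hq hqt
      have hc : c = μ {ω | A ω = a ∧ Y ω = y} / q := by
        rw [ENNReal.eq_div_iff hq hqt, ← hAZ, e2, mul_comm]
      -- clear denominators in the equalized-odds hypothesis
      have he := heo yh a y hq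
      rw [← hc] at he
      have hL : μ {ω | f (X ω) = yh ∧ A ω = a ∧ Y ω = y}
          = q * (μ {ω | f (X ω) = yh ∧ Y ω = y} / q * c) :=
        ((ENNReal.eq_div_iff hq hqt).mp he.symm).symm
      rw [e1, hL, ← mul_assoc, ENNReal.mul_div_cancel hq hqt, mul_comm]
  -- now compare the pushforward laws of the triples
  have hfX : Measurable (fun ω => f (X ω)) := (measurable_of_countable f).comp hX
  have hAt : Measurable (fun ω => h (Y ω) (eps ω)) :=
    (measurable_of_countable (fun p : 𝒴 × E => h p.1 p.2)).comp (hY.prodMk heps)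
  have hg1 : Measurable (fun ω => (f (X ω), Y ω, A ω)) := hfX.prodMk (hY.prodMk hA)
  have hg2 : Measurable (fun ω => (f (X ω), Y ω, h (Y ω) (eps ω))) :=
    hfX.prodMk (hY.prodMk hAt)
  have hmap : Measure.map (fun ω => (f (X ω), Y ω, A ω)) μ
      = Measure.map (fun ω => (f (X ω), Y ω, h (Y ω) (eps ω))) μ := by
    apply Measure.ext_of_singleton
    rintro ⟨yh, y, a⟩
    rw [Measure.map_apply hg1 (measurableSet_singleton _),
      Measure.map_apply hg2 (measurableSet_singleton _)]
    have p1 : (fun ω => (f (X ω), Y ω, A ω)) ⁻¹' {(yh, y, a)}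
        = {ω | f (X ω) = yh ∧ A ω = a ∧ Y ω = y} := by
      ext ω
      simp only [Set.mem_preimage, Set.mem_singleton_iff, Prod.mk.injEq, Set.mem_setOf_eq]
      tauto
    have p2 : (fun ω => (f (X ω), Y ω, h (Y ω) (eps ω))) ⁻¹' {(yh, y, a)}
        = {ω | f (X ω) = yh ∧ h (Y ω) (eps ω) = a ∧ Y ω = y} := by
      ext ω
      simp only [Set.mem_preimage, Set.mem_singleton_iff, Prod.mk.injEq, Set.mem_setOf_eq]
      tauto
    rw [p1, p2, key]
  have hT : Measurable (fun p : 𝒴' × 𝒴 × 𝒜 => T p.1 p.2.1 p.2.2) :=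
    measurable_of_countable _
  calc Measure.map (fun ω => T (f (X ω)) (Y ω) (A ω)) μ
      = Measure.map (fun p : 𝒴' × 𝒴 × 𝒜 => T p.1 p.2.1 p.2.2)
          (Measure.map (fun ω => (f (X ω), Y ω, A ω)) μ) := by
        rw [Measure.map_map hT hg1]; rfl
    _ = Measure.map (fun p : 𝒴' × 𝒴 × 𝒜 => T p.1 p.2.1 p.2.2)
          (Measure.map (fun ω => (f (X ω), Y ω, h (Y ω) (eps ω))) μ) := by rw [hmap]
    _ = Measure.map (fun ω => T (f (X ω)) (Y ω) (h (Y ω) (eps ω))) μ := by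
        rw [Measure.map_map hT hg2]; rfl
end

section
/- Let (Xᵢ, Aᵢ, Yᵢ), i = 1,…,n be i.i.d. discrete random triples, and let f be a fixed function with Ŷᵢ = f(Xᵢ). For each i, let Ãᵢ = h(Yᵢ, εᵢ) where ε₁,…,εₙ are i.i.d. and independent of all (Xᵢ, Aᵢ, Yᵢ), and the conditional law of Ãᵢ given Yᵢ equals that of Aᵢ given Yᵢ. If Ŷ₁ is conditionally independent of A₁ given Y₁, then the random vectors (Ŷ₁, A₁, Y₁, …, Ŷₙ, Aₙ, Yₙ) and (Ŷ₁, Ã₁, Y₁, …, Ŷₙ, Ãₙ, Yₙ) have the same joint distribution. -/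
open MeasureTheory ProbabilityTheory
open scoped ENNReal



lemma aux_tsum_pi_prod {E : Type*} [Countable E] : ∀ {n : ℕ} (g : Fin n → E → ℝ≥0∞),
    ∑' e : Fin n → E, ∏ i, g i (e i) = ∏ i, ∑' x, g i x := by
  intro n
  induction n with
  | zero =>
      intro g
      have hu : (Finset.univ : Finset (Fin 0)) = ∅ := rfl
      simp only [hu, Finset.prod_empty]
      haveI : Unique (Fin 0 → E) := ⟨⟨fun i => i.elim0⟩, fun a => funext fun i => i.elim0⟩
      rw [tsum_eq_single (default : Fin 0 → E) (fun b hb => absurd (Subsingleton.elim b default) hb)]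
  | succ n ih =>
      intro g
      rw [← (Fin.consEquiv fun _ : Fin (n+1) => E).tsum_eq (f := fun e => ∏ i, g i (e i))]
      have h1 : ∀ p : E × (Fin n → E), ∏ i, g i ((Fin.consEquiv fun _ : Fin (n+1) => E) p i)
          = g 0 p.1 * ∏ i : Fin n, g i.succ (p.2 i) := by
        intro p
        rw [Fin.prod_univ_succ]
        simp [Fin.consEquiv]
      rw [tsum_congr h1, ENNReal.tsum_prod']
      simp_rw [ENNReal.tsum_mul_left]
      rw [ENNReal.tsum_mul_right, ih (fun i => g i.succ), Fin.prod_univ_succ]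

lemma measurableSet_of_countable' {α : Type*} [Countable α] [MeasurableSpace α]
    [MeasurableSingletonClass α] (s : Set α) : MeasurableSet s :=
  (Set.to_countable s).measurableSet

lemma aux_single_sample
    {Ω : Type*} [MeasurableSpace Ω] (μ : Measure Ω) [IsProbabilityMeasure μ]
    {𝒳 𝒜 𝒴 𝒴' E : Type*}
    [Countable 𝒳] [Countable 𝒜] [Countable 𝒴] [Countable 𝒴'] [Countable E]
    [MeasurableSpace 𝒳] [MeasurableSingletonClass 𝒳]
    [MeasurableSpace 𝒜] [MeasurableSingletonClass 𝒜]
    [MeasurableSpace 𝒴] [MeasurableSingletonClass 𝒴]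
    [MeasurableSpace 𝒴'] [MeasurableSingletonClass 𝒴']
    [MeasurableSpace E] [MeasurableSingletonClass E]
    (X : Ω → 𝒳) (A : Ω → 𝒜) (Y : Ω → 𝒴) (eps : Ω → E)
    (f : 𝒳 → 𝒴') (h : 𝒴 → E → 𝒜)
    (hind : IndepFun eps (fun ω => (X ω, Y ω)) μ)
    (hlaw1 : ∀ (a : 𝒜) (y : 𝒴), μ {ω | Y ω = y} ≠ 0 →
      μ {ω | h (Y ω) (eps ω) = a ∧ Y ω = y} / μ {ω | Y ω = y}
        = μ {ω | A ω = a ∧ Y ω = y} / μ {ω | Y ω = y})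
    (heo1 : ∀ (yh : 𝒴') (a : 𝒜) (y : 𝒴), μ {ω | Y ω = y} ≠ 0 →
      μ {ω | f (X ω) = yh ∧ A ω = a ∧ Y ω = y} / μ {ω | Y ω = y}
        = (μ {ω | f (X ω) = yh ∧ Y ω = y} / μ {ω | Y ω = y}) *
          (μ {ω | A ω = a ∧ Y ω = y} / μ {ω | Y ω = y}))
    (yh : 𝒴') (a : 𝒜) (y : 𝒴) :
    μ {ω | f (X ω) = yh ∧ A ω = a ∧ Y ω = y}
      = μ {ω | f (X ω) = yh ∧ h (Y ω) (eps ω) = a ∧ Y ω = y} := by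
  by_cases hp : μ {ω | Y ω = y} = 0
  · rw [measure_mono_null (fun ω hw => hw.2.2) hp,
      measure_mono_null (fun ω hw => hw.2.2) hp]
  · set p := μ {ω | Y ω = y} with hpdef
    have hptop : p ≠ ⊤ := measure_ne_top μ _
    -- independence facts
    have i1 : μ {ω | h y (eps ω) = a ∧ Y ω = y}
        = μ {ω | h y (eps ω) = a} * μ {ω | Y ω = y} :=
      (hind.comp (measurable_of_countable (h y)) measurable_snd).measure_inter_preimage_eq_mul
        {a} {y} (measurableSet_of_countable' _) (measurableSet_of_countable' _)
    have i2 : μ {ω | h y (eps ω) = a ∧ (f (X ω) = yh ∧ Y ω = y)}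
        = μ {ω | h y (eps ω) = a} * μ {ω | f (X ω) = yh ∧ Y ω = y} :=
      (hind.comp (measurable_of_countable (h y))
        (measurable_of_countable (fun t : 𝒳 × 𝒴 => (f t.1, t.2)))).measure_inter_preimage_eq_mul
        {a} {t : 𝒴' × 𝒴 | t.1 = yh ∧ t.2 = y}
        (measurableSet_of_countable' _) (measurableSet_of_countable' _)
    -- rewrite law
    have hset1 : {ω | h (Y ω) (eps ω) = a ∧ Y ω = y} = {ω | h y (eps ω) = a ∧ Y ω = y} := by
      ext ω; constructor
      · rintro ⟨h1, h2⟩; rw [h2] at h1; exact ⟨h1, h2⟩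
      · rintro ⟨h1, h2⟩; refine ⟨?_, h2⟩; rw [h2]; exact h1
    have hset2 : {ω | f (X ω) = yh ∧ h (Y ω) (eps ω) = a ∧ Y ω = y}
        = {ω | h y (eps ω) = a ∧ (f (X ω) = yh ∧ Y ω = y)} := by
      ext ω; constructor
      · rintro ⟨h1, h2, h3⟩; rw [h3] at h2; exact ⟨h2, h1, h3⟩
      · rintro ⟨h2, h1, h3⟩; refine ⟨h1, ?_, h3⟩; rw [h3]; exact h2
    have hq : μ {ω | h y (eps ω) = a} = μ {ω | A ω = a ∧ Y ω = y} / p := by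
      have := hlaw1 a y hp
      rw [hset1, i1, ← hpdef, mul_div_assoc, ENNReal.div_self hp hptop, mul_one] at this
      exact this
    have heq := heo1 yh a y hp
    -- multiply heo by p
    have hmain : μ {ω | f (X ω) = yh ∧ A ω = a ∧ Y ω = y}
        = μ {ω | f (X ω) = yh ∧ Y ω = y} * (μ {ω | A ω = a ∧ Y ω = y} / p) := by
      have h2 : μ {ω | f (X ω) = yh ∧ A ω = a ∧ Y ω = y}
          = μ {ω | f (X ω) = yh ∧ A ω = a ∧ Y ω = y} / p * p :=
        (ENNReal.div_mul_cancel hp hptop).symm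
      rw [h2, heq, mul_comm (μ {ω | f (X ω) = yh ∧ Y ω = y} / p) _, mul_assoc,
        ENNReal.div_mul_cancel hp hptop, mul_comm]
    rw [hmain, hset2, i2, ← hq, mul_comm]



/-- n-sample extension of Proposition 1: for i.i.d. triples (Xᵢ, Aᵢ, Yᵢ) with Ŷᵢ = f(Xᵢ)
and fair dummies Ãᵢ = h(Yᵢ, εᵢ) built from i.i.d. noise independent of the data, if
equalized odds holds then the two n-sample joint distributions coincide. -/
theorem fair_dummies_n_sample
    {Ω : Type*} [MeasurableSpace Ω] (μ : Measure Ω) [IsProbabilityMeasure μ]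
    {𝒳 𝒜 𝒴 𝒴' E : Type*}
    [Countable 𝒳] [Countable 𝒜] [Countable 𝒴] [Countable 𝒴'] [Countable E]
    [MeasurableSpace 𝒳] [MeasurableSingletonClass 𝒳]
    [MeasurableSpace 𝒜] [MeasurableSingletonClass 𝒜]
    [MeasurableSpace 𝒴] [MeasurableSingletonClass 𝒴]
    [MeasurableSpace 𝒴'] [MeasurableSingletonClass 𝒴']
    [MeasurableSpace E] [MeasurableSingletonClass E]
    {n : ℕ} (hn : 0 < n)
    (X : Fin n → Ω → 𝒳) (A : Fin n → Ω → 𝒜) (Y : Fin n → Ω → 𝒴) (eps : Fin n → Ω → E)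
    (f : 𝒳 → 𝒴') (h : 𝒴 → E → 𝒜)
    (hX : ∀ i, Measurable (X i)) (hA : ∀ i, Measurable (A i))
    (hY : ∀ i, Measurable (Y i)) (heps : ∀ i, Measurable (eps i))
    -- the triples (Xᵢ, Aᵢ, Yᵢ) are i.i.d.
    (hindep : iIndepFun (fun i ω => (X i ω, A i ω, Y i ω)) μ)
    (hident : ∀ i j, IdentDistrib (fun ω => (X i ω, A i ω, Y i ω))
      (fun ω => (X j ω, A j ω, Y j ω)) μ μ)
    -- the εᵢ are i.i.d. and independent of all the triples
    (hepsindep : iIndepFun eps μ)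
    (hepsident : ∀ i j, IdentDistrib (eps i) (eps j) μ μ)
    (hepsdata : IndepFun (fun ω (i : Fin n) => eps i ω)
      (fun ω (i : Fin n) => (X i ω, A i ω, Y i ω)) μ)
    -- the conditional law of Ãᵢ = h(Yᵢ, εᵢ) given Yᵢ equals that of Aᵢ given Yᵢ
    (hlaw : ∀ (i : Fin n) (a : 𝒜) (y : 𝒴), μ {ω | Y i ω = y} ≠ 0 →
      μ {ω | h (Y i ω) (eps i ω) = a ∧ Y i ω = y} / μ {ω | Y i ω = y}
        = μ {ω | A i ω = a ∧ Y i ω = y} / μ {ω | Y i ω = y})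
    -- equalized odds for the first sample: Ŷ₁ ⟂ A₁ ∣ Y₁
    (heo : ∀ (yh : 𝒴') (a : 𝒜) (y : 𝒴), μ {ω | Y ⟨0, hn⟩ ω = y} ≠ 0 →
      μ {ω | f (X ⟨0, hn⟩ ω) = yh ∧ A ⟨0, hn⟩ ω = a ∧ Y ⟨0, hn⟩ ω = y}
          / μ {ω | Y ⟨0, hn⟩ ω = y}
        = (μ {ω | f (X ⟨0, hn⟩ ω) = yh ∧ Y ⟨0, hn⟩ ω = y} / μ {ω | Y ⟨0, hn⟩ ω = y}) *
          (μ {ω | A ⟨0, hn⟩ ω = a ∧ Y ⟨0, hn⟩ ω = y} / μ {ω | Y ⟨0, hn⟩ ω = y})) :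
    Measure.map (fun ω (i : Fin n) => (f (X i ω), A i ω, Y i ω)) μ
      = Measure.map (fun ω (i : Fin n) => (f (X i ω), h (Y i ω) (eps i ω), Y i ω)) μ := by
  classical
  have hf : Measurable f := measurable_of_countable f
  have hTm : ∀ i, Measurable (fun ω => (X i ω, A i ω, Y i ω)) :=
    fun i => (hX i).prodMk ((hA i).prodMk (hY i))
  have hF1 : Measurable (fun ω (i : Fin n) => (f (X i ω), A i ω, Y i ω)) :=
    measurable_pi_lambda _ fun i => (hf.comp (hX i)).prodMk ((hA i).prodMk (hY i))
  have hhm : ∀ i, Measurable (fun ω => h (Y i ω) (eps i ω)) := fun i =>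
    (measurable_of_countable (Function.uncurry h)).comp ((hY i).prodMk (heps i))
  have hF2 : Measurable (fun ω (i : Fin n) => (f (X i ω), h (Y i ω) (eps i ω), Y i ω)) :=
    measurable_pi_lambda _ fun i => (hf.comp (hX i)).prodMk ((hhm i).prodMk (hY i))
  refine Measure.ext_of_singleton fun g => ?_
  rw [Measure.map_apply hF1 (measurableSet_singleton g),
      Measure.map_apply hF2 (measurableSet_singleton g)]
  -- LHS as a product
  have key1 : μ ((fun ω (i : Fin n) => (f (X i ω), A i ω, Y i ω)) ⁻¹' {g})
      = ∏ i, μ {ω | (f (X i ω), A i ω, Y i ω) = g i} := by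
    have hs := hindep.measure_inter_preimage_eq_mul Finset.univ
      (sets := fun i => {t : 𝒳 × 𝒜 × 𝒴 | (f t.1, t.2.1, t.2.2) = g i})
      (fun i _ => measurableSet_of_countable' _)
    have hset : (fun ω (i : Fin n) => (f (X i ω), A i ω, Y i ω)) ⁻¹' {g}
        = ⋂ i ∈ Finset.univ, (fun i ω => (X i ω, A i ω, Y i ω)) i ⁻¹'
            {t : 𝒳 × 𝒜 × 𝒴 | (f t.1, t.2.1, t.2.2) = g i} := by
      ext ω
      simp [funext_iff]
    rw [hset, hs]
    exact Finset.prod_congr rfl fun i _ => rfl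
  -- RHS as a product
  have key2 : μ ((fun ω (i : Fin n) => (f (X i ω), h (Y i ω) (eps i ω), Y i ω)) ⁻¹' {g})
      = ∏ i, μ {ω | (f (X i ω), h (Y i ω) (eps i ω), Y i ω) = g i} := by
    set C : Fin n → E → Set Ω := fun i x =>
      {ω | f (X i ω) = (g i).1 ∧ h (g i).2.2 x = (g i).2.1 ∧ Y i ω = (g i).2.2} with hC
    have hCpre : ∀ i x, C i x = (fun ω => (X i ω, A i ω, Y i ω)) ⁻¹'
        {t : 𝒳 × 𝒜 × 𝒴 | f t.1 = (g i).1 ∧ h (g i).2.2 x = (g i).2.1 ∧ t.2.2 = (g i).2.2} :=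
      fun i x => rfl
    have hCmeas : ∀ i x, MeasurableSet (C i x) := fun i x => by
      rw [hCpre]; exact hTm i (measurableSet_of_countable' _)
    -- decomposition over the noise values
    have hdecomp : (fun ω (i : Fin n) => (f (X i ω), h (Y i ω) (eps i ω), Y i ω)) ⁻¹' {g}
        = ⋃ e : Fin n → E, ((fun ω (i : Fin n) => eps i ω) ⁻¹' {e} ∩ ⋂ i, C i (e i)) := by
      ext ω
      constructor
      · intro hw
        have hw' : ∀ i, (f (X i ω), h (Y i ω) (eps i ω), Y i ω) = g i := fun i => congrFun hw i
        refine Set.mem_iUnion.mpr ⟨fun i => eps i ω, rfl, Set.mem_iInter.mpr fun i => ?_⟩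
        have h1 := congrArg Prod.fst (hw' i)
        have h2 := congrArg (fun t : 𝒴' × 𝒜 × 𝒴 => t.2.1) (hw' i)
        have h3 := congrArg (fun t : 𝒴' × 𝒜 × 𝒴 => t.2.2) (hw' i)
        exact ⟨h1, by rw [← show Y i ω = (g i).2.2 from h3]; exact h2, h3⟩
      · intro hw
        obtain ⟨e, he, hcs⟩ := Set.mem_iUnion.mp hw
        have he' : ∀ i, eps i ω = e i := fun i => congrFun he i
        have hci := fun i => Set.mem_iInter.mp hcs i
        show (fun i => (f (X i ω), h (Y i ω) (eps i ω), Y i ω)) = g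
        funext i
        obtain ⟨c1, c2, c3⟩ := hci i
        have hhh : h (Y i ω) (eps i ω) = (g i).2.1 := by rw [c3, he' i]; exact c2
        rw [c1, hhh, c3]
    have hepsvecm : Measurable (fun ω (i : Fin n) => eps i ω) :=
      measurable_pi_lambda _ heps
    have hdisj : Pairwise (Function.onFun Disjoint fun e : Fin n → E =>
        ((fun ω (i : Fin n) => eps i ω) ⁻¹' {e} ∩ ⋂ i, C i (e i))) := by
      intro e e' hne
      refine Set.disjoint_left.mpr ?_
      rintro ω ⟨h1, _⟩ ⟨h2, _⟩
      have h1' : (fun i => eps i ω) = e := h1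
      have h2' : (fun i => eps i ω) = e' := h2
      exact hne (h1'.symm.trans h2')
    have hmeas : ∀ e : Fin n → E, MeasurableSet
        ((fun ω (i : Fin n) => eps i ω) ⁻¹' {e} ∩ ⋂ i, C i (e i)) := fun e =>
      (hepsvecm (measurableSet_singleton e)).inter
        (MeasurableSet.iInter fun i => hCmeas i (e i))
    have hterm : ∀ e : Fin n → E,
        μ ((fun ω (i : Fin n) => eps i ω) ⁻¹' {e} ∩ ⋂ i, C i (e i))
          = ∏ i, (μ (eps i ⁻¹' {e i}) * μ (C i (e i))) := by
      intro e
      have hinter : (⋂ i, C i (e i)) = (fun ω (i : Fin n) => (X i ω, A i ω, Y i ω)) ⁻¹'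
          {t : Fin n → 𝒳 × 𝒜 × 𝒴 | ∀ i, f (t i).1 = (g i).1 ∧
            h (g i).2.2 (e i) = (g i).2.1 ∧ (t i).2.2 = (g i).2.2} := by
        ext ω
        simp only [Set.mem_iInter, Set.mem_preimage, Set.mem_setOf_eq, hC]
      rw [hinter, hepsdata.measure_inter_preimage_eq_mul {e} _
        (measurableSet_singleton e) (measurableSet_of_countable' _)]
      have h2 : (fun ω (i : Fin n) => eps i ω) ⁻¹' {e} = ⋂ i ∈ Finset.univ, eps i ⁻¹' {e i} := by
        ext ω; simp [funext_iff]
      have h3 := hepsindep.measure_inter_preimage_eq_mul Finset.univ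
        (sets := fun i => ({e i} : Set E)) (fun i _ => measurableSet_singleton _)
      have h4 : (fun ω (i : Fin n) => (X i ω, A i ω, Y i ω)) ⁻¹'
          {t : Fin n → 𝒳 × 𝒜 × 𝒴 | ∀ i, f (t i).1 = (g i).1 ∧
            h (g i).2.2 (e i) = (g i).2.1 ∧ (t i).2.2 = (g i).2.2}
          = ⋂ i ∈ Finset.univ, (fun i ω => (X i ω, A i ω, Y i ω)) i ⁻¹'
            {t : 𝒳 × 𝒜 × 𝒴 | f t.1 = (g i).1 ∧ h (g i).2.2 (e i) = (g i).2.1 ∧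
              t.2.2 = (g i).2.2} := by
        ext ω; simp
      have h5 := hindep.measure_inter_preimage_eq_mul Finset.univ
        (sets := fun i => {t : 𝒳 × 𝒜 × 𝒴 | f t.1 = (g i).1 ∧
          h (g i).2.2 (e i) = (g i).2.1 ∧ t.2.2 = (g i).2.2})
        (fun i _ => measurableSet_of_countable' _)
      rw [h2, h3, h4, h5, ← Finset.prod_mul_distrib]
      exact Finset.prod_congr rfl fun i _ => rfl
    rw [hdecomp, measure_iUnion hdisj hmeas, tsum_congr hterm,
      aux_tsum_pi_prod (fun i x => μ (eps i ⁻¹' {x}) * μ (C i x))]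
    -- identify each factor
    refine Finset.prod_congr rfl fun i _ => ?_
    have hiT : IndepFun (eps i) (fun ω => (X i ω, A i ω, Y i ω)) μ :=
      hepsdata.comp (measurable_pi_apply i) (measurable_pi_apply i)
    have hsum : {ω | (f (X i ω), h (Y i ω) (eps i ω), Y i ω) = g i}
        = ⋃ x : E, (eps i ⁻¹' {x} ∩ C i x) := by
      ext ω
      constructor
      · intro hw
        have hw' : (f (X i ω), h (Y i ω) (eps i ω), Y i ω) = g i := hw
        have h1 := congrArg Prod.fst hw'
        have h2 := congrArg (fun t : 𝒴' × 𝒜 × 𝒴 => t.2.1) hw'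
        have h3 := congrArg (fun t : 𝒴' × 𝒜 × 𝒴 => t.2.2) hw'
        exact Set.mem_iUnion.mpr ⟨eps i ω, rfl, h1, by rw [← show Y i ω = (g i).2.2 from h3]; exact h2, h3⟩
      · intro hw
        obtain ⟨x, hx, c1, c2, c3⟩ := Set.mem_iUnion.mp hw
        have hx' : eps i ω = x := hx
        have hhh : h (Y i ω) (eps i ω) = (g i).2.1 := by rw [c3, hx']; exact c2
        show (f (X i ω), h (Y i ω) (eps i ω), Y i ω) = g i
        rw [c1, hhh, c3]
    have hdisj' : Pairwise (Function.onFun Disjoint fun x : E => eps i ⁻¹' {x} ∩ C i x) := by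
      intro x x' hne
      refine Set.disjoint_left.mpr ?_
      rintro ω ⟨h1, _⟩ ⟨h2, _⟩
      have h1' : eps i ω = x := h1
      have h2' : eps i ω = x' := h2
      exact hne (h1'.symm.trans h2')
    have hmeas' : ∀ x : E, MeasurableSet (eps i ⁻¹' {x} ∩ C i x) := fun x =>
      ((heps i) (measurableSet_singleton x)).inter (hCmeas i x)
    rw [hsum, measure_iUnion hdisj' hmeas']
    refine tsum_congr fun x => ?_
    rw [hCpre]
    exact (hiT.measure_inter_preimage_eq_mul {x} _ (measurableSet_singleton x)
      (measurableSet_of_countable' _)).symm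
  rw [key1, key2]
  refine Finset.prod_congr rfl fun i _ => ?_
  have e1 : {ω | (f (X i ω), A i ω, Y i ω) = g i}
      = {ω | f (X i ω) = (g i).1 ∧ A i ω = (g i).2.1 ∧ Y i ω = (g i).2.2} := by
    ext ω; simp [Prod.ext_iff]
  have e2 : {ω | (f (X i ω), h (Y i ω) (eps i ω), Y i ω) = g i}
      = {ω | f (X i ω) = (g i).1 ∧ h (Y i ω) (eps i ω) = (g i).2.1 ∧ Y i ω = (g i).2.2} := by
    ext ω; simp [Prod.ext_iff]
  rw [e1, e2]
  have hiT : IndepFun (eps i) (fun ω => (X i ω, A i ω, Y i ω)) μ :=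
    hepsdata.comp (measurable_pi_apply i) (measurable_pi_apply i)
  have hindXY : IndepFun (eps i) (fun ω => (X i ω, Y i ω)) μ :=
    hiT.comp measurable_id (measurable_of_countable fun t : 𝒳 × 𝒜 × 𝒴 => (t.1, t.2.2))
  have h0' : ∀ B : Set (𝒳 × 𝒜 × 𝒴), μ ((fun ω => (X i ω, A i ω, Y i ω)) ⁻¹' B)
      = μ ((fun ω => (X ⟨0, hn⟩ ω, A ⟨0, hn⟩ ω, Y ⟨0, hn⟩ ω)) ⁻¹' B) :=
    fun B => (hident i ⟨0, hn⟩).measure_mem_eq (measurableSet_of_countable' B)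
  have eY : ∀ y : 𝒴, μ {ω | Y i ω = y} = μ {ω | Y ⟨0, hn⟩ ω = y} :=
    fun y => h0' {t | t.2.2 = y}
  have eQ : ∀ (yh : 𝒴') (a : 𝒜) (y : 𝒴),
      μ {ω | f (X i ω) = yh ∧ A i ω = a ∧ Y i ω = y}
        = μ {ω | f (X ⟨0, hn⟩ ω) = yh ∧ A ⟨0, hn⟩ ω = a ∧ Y ⟨0, hn⟩ ω = y} :=
    fun yh a y => h0' {t | f t.1 = yh ∧ t.2.1 = a ∧ t.2.2 = y}
  have eF : ∀ (yh : 𝒴') (y : 𝒴), μ {ω | f (X i ω) = yh ∧ Y i ω = y}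
      = μ {ω | f (X ⟨0, hn⟩ ω) = yh ∧ Y ⟨0, hn⟩ ω = y} :=
    fun yh y => h0' {t | f t.1 = yh ∧ t.2.2 = y}
  have eA : ∀ (a : 𝒜) (y : 𝒴), μ {ω | A i ω = a ∧ Y i ω = y}
      = μ {ω | A ⟨0, hn⟩ ω = a ∧ Y ⟨0, hn⟩ ω = y} :=
    fun a y => h0' {t | t.2.1 = a ∧ t.2.2 = y}
  have heo_i : ∀ (yh : 𝒴') (a : 𝒜) (y : 𝒴), μ {ω | Y i ω = y} ≠ 0 →
      μ {ω | f (X i ω) = yh ∧ A i ω = a ∧ Y i ω = y} / μ {ω | Y i ω = y}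
        = (μ {ω | f (X i ω) = yh ∧ Y i ω = y} / μ {ω | Y i ω = y}) *
          (μ {ω | A i ω = a ∧ Y i ω = y} / μ {ω | Y i ω = y}) := by
    intro yh a y hp
    rw [eY, eQ, eF, eA]
    exact heo yh a y (by rwa [eY] at hp)
  exact aux_single_sample μ (X i) (A i) (Y i) (eps i) f h hindXY (hlaw i) heo_i
    (g i).1 (g i).2.1 (g i).2.2
end

section
/- Let Ŷ, A, Y be discrete random variables. Suppose that for every measurable function T taking values in ℝ, the random variables T(Ŷ, A, Y) and T(Ŷ, Ã, Y) have the same distribution, where Ã is conditionally independent of (Ŷ, A) given Y with the same conditional law given Y as A. Then Ŷ is conditionally independent of A given Y. -/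
open MeasureTheory

/-- Converse completeness of the fair dummies test: if no (measurable, real-valued) test
statistic T can distinguish (Ŷ, A, Y) from (Ŷ, Ã, Y) in distribution, where Ã is a fair
dummy (conditionally independent of (Ŷ, A) given Y, with the same conditional law given Y
as A), then Ŷ ⟂ A ∣ Y. -/
theorem fair_dummies_test_complete
    {Ω : Type*} [MeasurableSpace Ω] (μ : Measure Ω) [IsProbabilityMeasure μ]
    {𝒴' 𝒜 𝒴 : Type*} [Countable 𝒴'] [Countable 𝒜] [Countable 𝒴]
    [MeasurableSpace 𝒴'] [MeasurableSingletonClass 𝒴']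
    [MeasurableSpace 𝒜] [MeasurableSingletonClass 𝒜]
    [MeasurableSpace 𝒴] [MeasurableSingletonClass 𝒴]
    (Yhat : Ω → 𝒴') (A : Ω → 𝒜) (Y : Ω → 𝒴) (Atil : Ω → 𝒜)
    (hYhat : Measurable Yhat) (hA : Measurable A) (hY : Measurable Y)
    (hAtil : Measurable Atil)
    -- Ã is conditionally independent of (Ŷ, A) given Y
    (hci : ∀ (b : 𝒜) (yh : 𝒴') (a : 𝒜) (y : 𝒴), μ {ω | Y ω = y} ≠ 0 →
      μ {ω | Atil ω = b ∧ Yhat ω = yh ∧ A ω = a ∧ Y ω = y} / μ {ω | Y ω = y}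
        = (μ {ω | Atil ω = b ∧ Y ω = y} / μ {ω | Y ω = y}) *
          (μ {ω | Yhat ω = yh ∧ A ω = a ∧ Y ω = y} / μ {ω | Y ω = y}))
    -- conditional law of Ã given Y equals that of A given Y
    (hlaw : ∀ (a : 𝒜) (y : 𝒴), μ {ω | Y ω = y} ≠ 0 →
      μ {ω | Atil ω = a ∧ Y ω = y} / μ {ω | Y ω = y}
        = μ {ω | A ω = a ∧ Y ω = y} / μ {ω | Y ω = y})
    -- every measurable test statistic has the same distribution on the two triples
    (hT : ∀ T : 𝒴' × 𝒜 × 𝒴 → ℝ, Measurable T →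
      Measure.map (fun ω => T (Yhat ω, A ω, Y ω)) μ
        = Measure.map (fun ω => T (Yhat ω, Atil ω, Y ω)) μ) :
    ∀ (yh : 𝒴') (a : 𝒜) (y : 𝒴), μ {ω | Y ω = y} ≠ 0 →
      μ {ω | Yhat ω = yh ∧ A ω = a ∧ Y ω = y} / μ {ω | Y ω = y}
        = (μ {ω | Yhat ω = yh ∧ Y ω = y} / μ {ω | Y ω = y}) *
          (μ {ω | A ω = a ∧ Y ω = y} / μ {ω | Y ω = y}) := by
  intro yh a y hy0
  set c := μ {ω | Y ω = y} with hc
  have hcfin : c ≠ ⊤ := (measure_lt_top μ _).ne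
  -- measurability of basic sets
  have mY : ∀ y' : 𝒴, MeasurableSet {ω | Y ω = y'} := fun y' => hY (measurableSet_singleton y')
  have mYhat : ∀ z : 𝒴', MeasurableSet {ω | Yhat ω = z} := fun z => hYhat (measurableSet_singleton z)
  have mA : ∀ z : 𝒜, MeasurableSet {ω | A ω = z} := fun z => hA (measurableSet_singleton z)
  have mAtil : ∀ z : 𝒜, MeasurableSet {ω | Atil ω = z} := fun z => hAtil (measurableSet_singleton z)
  -- Step 1: from the test hypothesis, the joint distributions agree on the triple (yh,a,y)
  have hjoint : μ {ω | Yhat ω = yh ∧ A ω = a ∧ Y ω = y}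
      = μ {ω | Yhat ω = yh ∧ Atil ω = a ∧ Y ω = y} := by
    classical
    set T : 𝒴' × 𝒜 × 𝒴 → ℝ := fun p => if p.1 = yh ∧ p.2.1 = a ∧ p.2.2 = y then 1 else 0 with hTdef
    have hTm : Measurable T := by
      apply Measurable.ite _ measurable_const measurable_const
      have : {p : 𝒴' × 𝒜 × 𝒴 | p.1 = yh ∧ p.2.1 = a ∧ p.2.2 = y}
          = (Prod.fst ⁻¹' {yh}) ∩ ((Prod.fst ∘ Prod.snd) ⁻¹' {a}) ∩ ((Prod.snd ∘ Prod.snd) ⁻¹' {y}) := by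
        ext p; simp [and_assoc]
      rw [this]
      exact ((measurable_fst (measurableSet_singleton yh)).inter
        ((measurable_fst.comp measurable_snd) (measurableSet_singleton a))).inter
        ((measurable_snd.comp measurable_snd) (measurableSet_singleton y))
    have h := hT T hTm
    have h1 : Measure.map (fun ω => T (Yhat ω, A ω, Y ω)) μ {(1:ℝ)}
        = Measure.map (fun ω => T (Yhat ω, Atil ω, Y ω)) μ {(1:ℝ)} := by rw [h]
    rw [Measure.map_apply (show Measurable fun ω => T (Yhat ω, A ω, Y ω) from
          hTm.comp (hYhat.prodMk (hA.prodMk hY))) (measurableSet_singleton 1),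
        Measure.map_apply (show Measurable fun ω => T (Yhat ω, Atil ω, Y ω) from
          hTm.comp (hYhat.prodMk (hAtil.prodMk hY))) (measurableSet_singleton 1)] at h1
    have e1 : (fun ω => T (Yhat ω, A ω, Y ω)) ⁻¹' {(1:ℝ)}
        = {ω | Yhat ω = yh ∧ A ω = a ∧ Y ω = y} := by
      ext ω; simp only [hTdef, Set.mem_preimage, Set.mem_singleton_iff, Set.mem_setOf_eq]
      split_ifs with hcond <;> simp [hcond]
    have e2 : (fun ω => T (Yhat ω, Atil ω, Y ω)) ⁻¹' {(1:ℝ)}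
        = {ω | Yhat ω = yh ∧ Atil ω = a ∧ Y ω = y} := by
      ext ω; simp only [hTdef, Set.mem_preimage, Set.mem_singleton_iff, Set.mem_setOf_eq]
      split_ifs with hcond <;> simp [hcond]
    rw [e1, e2] at h1
    exact h1
  -- Step 2: decompose over values of A
  have hsum : μ {ω | Yhat ω = yh ∧ Atil ω = a ∧ Y ω = y}
      = ∑' a' : 𝒜, μ {ω | Atil ω = a ∧ Yhat ω = yh ∧ A ω = a' ∧ Y ω = y} := by
    have hU : {ω | Yhat ω = yh ∧ Atil ω = a ∧ Y ω = y}
        = ⋃ a' : 𝒜, {ω | Atil ω = a ∧ Yhat ω = yh ∧ A ω = a' ∧ Y ω = y} := by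
      ext ω; simp only [Set.mem_setOf_eq, Set.mem_iUnion]
      constructor
      · rintro ⟨h1, h2, h3⟩; exact ⟨A ω, h2, h1, rfl, h3⟩
      · rintro ⟨a', h1, h2, _, h4⟩; exact ⟨h2, h1, h4⟩
    rw [hU, measure_iUnion]
    · intro i j hij
      simp only [Function.onFun, Set.disjoint_left]
      rintro ω ⟨_, _, hi, _⟩ ⟨_, _, hj, _⟩
      exact hij (hi ▸ hj ▸ rfl)
    · intro a'
      have : {ω | Atil ω = a ∧ Yhat ω = yh ∧ A ω = a' ∧ Y ω = y}
          = {ω | Atil ω = a} ∩ ({ω | Yhat ω = yh} ∩ ({ω | A ω = a'} ∩ {ω | Y ω = y})) := by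
        ext ω; simp [Set.mem_setOf_eq, Set.mem_inter_iff]
      rw [this]
      exact (mAtil a).inter ((mYhat yh).inter ((mA a').inter (mY y)))
  have hsum2 : (∑' a' : 𝒜, μ {ω | Yhat ω = yh ∧ A ω = a' ∧ Y ω = y})
      = μ {ω | Yhat ω = yh ∧ Y ω = y} := by
    have hU : {ω | Yhat ω = yh ∧ Y ω = y}
        = ⋃ a' : 𝒜, {ω | Yhat ω = yh ∧ A ω = a' ∧ Y ω = y} := by
      ext ω; simp only [Set.mem_setOf_eq, Set.mem_iUnion]
      constructor
      · rintro ⟨h1, h2⟩; exact ⟨A ω, h1, rfl, h2⟩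
      · rintro ⟨a', h1, _, h3⟩; exact ⟨h1, h3⟩
    rw [hU, measure_iUnion]
    · intro i j hij
      simp only [Function.onFun, Set.disjoint_left]
      rintro ω ⟨_, hi, _⟩ ⟨_, hj, _⟩
      exact hij (hi ▸ hj ▸ rfl)
    · intro a'
      have : {ω | Yhat ω = yh ∧ A ω = a' ∧ Y ω = y}
          = {ω | Yhat ω = yh} ∩ ({ω | A ω = a'} ∩ {ω | Y ω = y}) := by
        ext ω; simp [Set.mem_setOf_eq, Set.mem_inter_iff]
      rw [this]
      exact (mYhat yh).inter ((mA a').inter (mY y))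
  -- Use hci on each term: numerator form
  have hterm : ∀ a' : 𝒜, μ {ω | Atil ω = a ∧ Yhat ω = yh ∧ A ω = a' ∧ Y ω = y}
      = μ {ω | Atil ω = a ∧ Y ω = y} * μ {ω | Yhat ω = yh ∧ A ω = a' ∧ Y ω = y} / c := by
    intro a'
    have h := hci a yh a' y hy0
    have := congrArg (· * c) h
    simp only [← hc, ENNReal.div_mul_cancel hy0 hcfin] at this
    rw [this]
    simp only [div_eq_mul_inv]
    calc μ {ω | Atil ω = a ∧ Y ω = y} * c⁻¹ * (μ {ω | Yhat ω = yh ∧ A ω = a' ∧ Y ω = y} * c⁻¹) * c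
        = μ {ω | Atil ω = a ∧ Y ω = y} * μ {ω | Yhat ω = yh ∧ A ω = a' ∧ Y ω = y} * c⁻¹ * (c⁻¹ * c) := by
          ring
      _ = μ {ω | Atil ω = a ∧ Y ω = y} * μ {ω | Yhat ω = yh ∧ A ω = a' ∧ Y ω = y} * c⁻¹ := by
          rw [ENNReal.inv_mul_cancel hy0 hcfin, mul_one]
  have key : μ {ω | Yhat ω = yh ∧ Atil ω = a ∧ Y ω = y}
      = μ {ω | Atil ω = a ∧ Y ω = y} * μ {ω | Yhat ω = yh ∧ Y ω = y} / c := by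
    rw [hsum]
    simp_rw [hterm, div_eq_mul_inv, ENNReal.tsum_mul_right, ENNReal.tsum_mul_left, hsum2]
  -- conditional laws agree, so numerators agree
  have hlaw' : μ {ω | Atil ω = a ∧ Y ω = y} = μ {ω | A ω = a ∧ Y ω = y} := by
    have h := hlaw a y hy0
    have := congrArg (· * c) h
    simpa only [← hc, ENNReal.div_mul_cancel hy0 hcfin] using this
  rw [hjoint, key, hlaw']
  simp only [div_eq_mul_inv]
  ring
end
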